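/- arXiv:2512.23076 — 2 statements merged into one kernel-verified Lean document; each statement's English description precedes it below -/
import Mathlib

section
/- For three jointly distributed discrete random variables X1, X2, X3, the dual total correlation satisfies the sandwich bound (1/3)[I(X1,X2;X3) + I(X2,X3;X1) + I(X1,X3;X2)] ≤ DTC(X1,X2,X3) ≤ (2/3)[I(X1,X2;X3) + I(X2,X3;X1) + I(X1,X3;X2)]. -/
open BigOperators

/-- A probability distribution on a finite sample space. -/
structure FinProb (Ω : Type*) [Fintype Ω] where
  p : Ω → ℝ
  nonneg : ∀ ω, 0 ≤ p ω
  sum_one : ∑ ω, p ω = 1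

/-- Probability that the discrete random variable `X` takes the value `s`. -/
noncomputable def probOf {Ω S : Type*} [Fintype Ω] [DecidableEq S]
    (μ : FinProb Ω) (X : Ω → S) (s : S) : ℝ :=
  ∑ ω, if X ω = s then μ.p ω else 0

/-- Shannon entropy of a discrete random variable. -/
noncomputable def entropy {Ω S : Type*} [Fintype Ω] [Fintype S] [DecidableEq S]
    (μ : FinProb Ω) (X : Ω → S) : ℝ :=
  -∑ s, probOf μ X s * Real.log (probOf μ X s)

/-- Conditional entropy `H(X | Y) = H(X,Y) - H(Y)`. -/
noncomputable def condEntropy {Ω S T : Type*} [Fintype Ω] [Fintype S] [Fintype T]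
    [DecidableEq S] [DecidableEq T] (μ : FinProb Ω) (X : Ω → S) (Y : Ω → T) : ℝ :=
  entropy μ (fun ω => (X ω, Y ω)) - entropy μ Y

/-- Mutual information `I(X;Y) = H(X) + H(Y) - H(X,Y)`. -/
noncomputable def mutualInfo {Ω S T : Type*} [Fintype Ω] [Fintype S] [Fintype T]
    [DecidableEq S] [DecidableEq T] (μ : FinProb Ω) (X : Ω → S) (Y : Ω → T) : ℝ :=
  entropy μ X + entropy μ Y - entropy μ (fun ω => (X ω, Y ω))

/-- Conditional mutual information `I(X;Y|Z) = H(X,Z) + H(Y,Z) - H(X,Y,Z) - H(Z)`. -/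
noncomputable def condMutualInfo {Ω S T U : Type*} [Fintype Ω] [Fintype S] [Fintype T]
    [Fintype U] [DecidableEq S] [DecidableEq T] [DecidableEq U]
    (μ : FinProb Ω) (X : Ω → S) (Y : Ω → T) (Z : Ω → U) : ℝ :=
  entropy μ (fun ω => (X ω, Z ω)) + entropy μ (fun ω => (Y ω, Z ω))
    - entropy μ (fun ω => (X ω, Y ω, Z ω)) - entropy μ Z

/-- Dual total correlation of three discrete random variables:
`DTC(X1,X2,X3) = H(X1,X2,X3) - H(X1|X2,X3) - H(X2|X1,X3) - H(X3|X1,X2)`. -/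
noncomputable def DTC3 {Ω S1 S2 S3 : Type*} [Fintype Ω] [Fintype S1] [Fintype S2] [Fintype S3]
    [DecidableEq S1] [DecidableEq S2] [DecidableEq S3]
    (μ : FinProb Ω) (X1 : Ω → S1) (X2 : Ω → S2) (X3 : Ω → S3) : ℝ :=
  entropy μ (fun ω => (X1 ω, X2 ω, X3 ω))
    - condEntropy μ X1 (fun ω => (X2 ω, X3 ω))
    - condEntropy μ X2 (fun ω => (X1 ω, X3 ω))
    - condEntropy μ X3 (fun ω => (X1 ω, X2 ω))

section aux
variable {Ω : Type*} [Fintype Ω]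

lemma probOf_nonneg {S : Type*} [DecidableEq S] (μ : FinProb Ω) (X : Ω → S) (s : S) :
    0 ≤ probOf μ X s :=
  Finset.sum_nonneg fun ω _ => by by_cases h : X ω = s <;> simp [h, μ.nonneg ω]

lemma sum_probOf {S : Type*} [Fintype S] [DecidableEq S] (μ : FinProb Ω) (X : Ω → S) :
    ∑ s, probOf μ X s = 1 := by
  unfold probOf
  rw [Finset.sum_comm]
  simp [μ.sum_one]

lemma gibbs {A : Type*} [Fintype A] (p q : A → ℝ)
    (hp : ∀ a, 0 ≤ p a) (hq : ∀ a, 0 ≤ q a)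
    (hpq : ∀ a, p a ≠ 0 → q a ≠ 0)
    (hps : ∑ a, p a = 1) (hqs : ∑ a, q a ≤ 1) :
    ∑ a, p a * Real.log (q a) ≤ ∑ a, p a * Real.log (p a) := by
  have h1 : ∀ a, p a * Real.log (q a) - p a * Real.log (p a) ≤ q a - p a := by
    intro a
    by_cases h : p a = 0
    · simp [h, hq a]
    · have hp' : 0 < p a := lt_of_le_of_ne (hp a) (Ne.symm h)
      have hq' : 0 < q a := lt_of_le_of_ne (hq a) (Ne.symm (hpq a h))
      have hlog := Real.log_le_sub_one_of_pos (div_pos hq' hp')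
      rw [Real.log_div (ne_of_gt hq') (ne_of_gt hp')] at hlog
      have h2 : p a * (Real.log (q a) - Real.log (p a)) ≤ p a * (q a / p a - 1) :=
        mul_le_mul_of_nonneg_left hlog (le_of_lt hp')
      have h3 : p a * (q a / p a - 1) = q a - p a := by
        field_simp
      nlinarith [h2, h3]
  have h2 : ∑ a, (p a * Real.log (q a) - p a * Real.log (p a)) ≤ ∑ a, (q a - p a) :=
    Finset.sum_le_sum fun a _ => h1 a
  rw [Finset.sum_sub_distrib, Finset.sum_sub_distrib, hps] at h2
  linarith

lemma probOf_comp_equiv {S T : Type*} [DecidableEq S] [DecidableEq T]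
    (μ : FinProb Ω) (e : S ≃ T) (X : Ω → S) (t : T) :
    probOf μ (fun ω => e (X ω)) t = probOf μ X (e.symm t) := by
  unfold probOf
  refine Finset.sum_congr rfl fun ω _ => ?_
  simp [Equiv.apply_eq_iff_eq_symm_apply]

lemma entropy_comp_equiv {S T : Type*} [Fintype S] [Fintype T] [DecidableEq S] [DecidableEq T]
    (μ : FinProb Ω) (e : S ≃ T) (X : Ω → S) :
    entropy μ (fun ω => e (X ω)) = entropy μ X := by
  unfold entropy
  congr 1
  rw [← Equiv.sum_comp e (fun t => probOf μ (fun ω => e (X ω)) t *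
      Real.log (probOf μ (fun ω => e (X ω)) t))]
  refine Finset.sum_congr rfl fun s _ => ?_
  simp [probOf_comp_equiv]


lemma submod {S T U : Type*} [Fintype S] [Fintype T] [Fintype U]
    [DecidableEq S] [DecidableEq T] [DecidableEq U]
    (μ : FinProb Ω) (X : Ω → S) (Y : Ω → T) (Z : Ω → U) :
    entropy μ (fun ω => (X ω, Y ω, Z ω)) + entropy μ Z
      ≤ entropy μ (fun ω => (X ω, Z ω)) + entropy μ (fun ω => (Y ω, Z ω)) := by
  classical
  set P : S → T → U → ℝ := fun x y z => probOf μ (fun ω => (X ω, Y ω, Z ω)) (x, y, z) with hPdef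
  set PXZ : S → U → ℝ := fun x z => probOf μ (fun ω => (X ω, Z ω)) (x, z) with hPXZdef
  set PYZ : T → U → ℝ := fun y z => probOf μ (fun ω => (Y ω, Z ω)) (y, z) with hPYZdef
  set PZ : U → ℝ := fun z => probOf μ Z z with hPZdef
  have hPnn : ∀ x y z, 0 ≤ P x y z := fun x y z => probOf_nonneg μ _ _
  have hPXZnn : ∀ x z, 0 ≤ PXZ x z := fun x z => probOf_nonneg μ _ _
  have hPYZnn : ∀ y z, 0 ≤ PYZ y z := fun y z => probOf_nonneg μ _ _
  have hPZnn : ∀ z, 0 ≤ PZ z := fun z => probOf_nonneg μ _ _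
  have mXZ : ∀ x z, ∑ y, P x y z = PXZ x z := by
    intro x z
    simp only [hPdef, hPXZdef, probOf]
    rw [Finset.sum_comm]
    refine Finset.sum_congr rfl fun ω _ => ?_
    by_cases h1 : X ω = x <;> by_cases h3 : Z ω = z <;>
      simp [Prod.ext_iff, h1, h3, Finset.sum_ite_eq]
  have mYZ : ∀ y z, ∑ x, P x y z = PYZ y z := by
    intro y z
    simp only [hPdef, hPYZdef, probOf]
    rw [Finset.sum_comm]
    refine Finset.sum_congr rfl fun ω _ => ?_
    by_cases h2 : Y ω = y <;> by_cases h3 : Z ω = z <;>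
      simp [Prod.ext_iff, h2, h3, Finset.sum_ite_eq]
  have mZx : ∀ z, ∑ x, PXZ x z = PZ z := by
    intro z
    simp only [hPXZdef, hPZdef, probOf]
    rw [Finset.sum_comm]
    refine Finset.sum_congr rfl fun ω _ => ?_
    by_cases h3 : Z ω = z <;> simp [Prod.ext_iff, h3, Finset.sum_ite_eq]
  have mZy : ∀ z, ∑ y, PYZ y z = PZ z := by
    intro z
    simp only [hPYZdef, hPZdef, probOf]
    rw [Finset.sum_comm]
    refine Finset.sum_congr rfl fun ω _ => ?_
    by_cases h3 : Z ω = z <;> simp [Prod.ext_iff, h3, Finset.sum_ite_eq]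
  have hle1 : ∀ x y z, P x y z ≤ PXZ x z := by
    intro x y z
    rw [← mXZ x z]
    exact Finset.single_le_sum (fun y' _ => hPnn x y' z) (Finset.mem_univ y)
  have hle2 : ∀ x y z, P x y z ≤ PYZ y z := by
    intro x y z
    rw [← mYZ y z]
    exact Finset.single_le_sum (fun x' _ => hPnn x' y z) (Finset.mem_univ x)
  have hle3 : ∀ x z, PXZ x z ≤ PZ z := by
    intro x z
    rw [← mZx z]
    exact Finset.single_le_sum (fun x' _ => hPXZnn x' z) (Finset.mem_univ x)
  -- entropies as sums over the product type
  have HXYZ : entropy μ (fun ω => (X ω, Y ω, Z ω))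
      = -∑ a : S × T × U, P a.1 a.2.1 a.2.2 * Real.log (P a.1 a.2.1 a.2.2) := by
    simp [entropy, hPdef]
  have HXZ : entropy μ (fun ω => (X ω, Z ω))
      = -∑ a : S × T × U, P a.1 a.2.1 a.2.2 * Real.log (PXZ a.1 a.2.2) := by
    simp only [entropy, Fintype.sum_prod_type]
    congr 1
    refine Finset.sum_congr rfl fun x _ => ?_
    rw [Finset.sum_comm]
    refine Finset.sum_congr rfl fun z _ => ?_
    rw [← Finset.sum_mul, mXZ]
  have HYZ : entropy μ (fun ω => (Y ω, Z ω))
      = -∑ a : S × T × U, P a.1 a.2.1 a.2.2 * Real.log (PYZ a.2.1 a.2.2) := by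
    simp only [entropy, Fintype.sum_prod_type]
    congr 1
    conv_rhs => rw [Finset.sum_comm]
    refine Finset.sum_congr rfl fun y _ => ?_
    rw [Finset.sum_comm]
    refine Finset.sum_congr rfl fun z _ => ?_
    rw [← Finset.sum_mul, mYZ]
  have HZ : entropy μ Z
      = -∑ a : S × T × U, P a.1 a.2.1 a.2.2 * Real.log (PZ a.2.2) := by
    simp only [entropy, Fintype.sum_prod_type]
    congr 1
    have e1 : ∀ x, ∑ y, ∑ z, P x y z * Real.log (PZ z) = ∑ z, PXZ x z * Real.log (PZ z) := by
      intro x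
      rw [Finset.sum_comm]
      exact Finset.sum_congr rfl fun z _ => by rw [← Finset.sum_mul, mXZ]
    simp only [e1]
    rw [Finset.sum_comm]
    refine Finset.sum_congr rfl fun z _ => ?_
    rw [← Finset.sum_mul, mZx]
  set Q : S → T → U → ℝ := fun x y z => if PZ z = 0 then 0 else PXZ x z * PYZ y z / PZ z
    with hQdef
  have key := gibbs (fun a : S × T × U => P a.1 a.2.1 a.2.2) (fun a => Q a.1 a.2.1 a.2.2)
    (fun a => hPnn _ _ _)
    (fun a => by
      by_cases h : PZ a.2.2 = 0
      · simp [hQdef, h]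
      · simp only [hQdef, if_neg h]
        exact div_nonneg (mul_nonneg (hPXZnn _ _) (hPYZnn _ _)) (hPZnn _))
    (fun a h => by
      have hP : 0 < P a.1 a.2.1 a.2.2 := (hPnn _ _ _).lt_of_ne (Ne.symm h)
      have h1 : 0 < PXZ a.1 a.2.2 := lt_of_lt_of_le hP (hle1 _ _ _)
      have h2 : 0 < PYZ a.2.1 a.2.2 := lt_of_lt_of_le hP (hle2 _ _ _)
      have h3 : 0 < PZ a.2.2 := lt_of_lt_of_le h1 (hle3 _ _)
      simp only [hQdef, if_neg (ne_of_gt h3)]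
      exact ne_of_gt (div_pos (mul_pos h1 h2) h3))
    (sum_probOf μ (fun ω => (X ω, Y ω, Z ω)))
    (by
      calc ∑ a : S × T × U, Q a.1 a.2.1 a.2.2 = ∑ x, ∑ y, ∑ z, Q x y z := by
            simp [Fintype.sum_prod_type]
        _ = ∑ x, ∑ z, ∑ y, Q x y z := Finset.sum_congr rfl (fun x _ => Finset.sum_comm)
        _ = ∑ z, ∑ x, ∑ y, Q x y z := Finset.sum_comm
        _ = ∑ z, (if PZ z = 0 then (0:ℝ) else PZ z) := by
            refine Finset.sum_congr rfl fun z _ => ?_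
            by_cases h : PZ z = 0
            · simp [hQdef, h]
            · simp only [hQdef, if_neg h]
              have e2 : ∀ x, ∑ y, PXZ x z * PYZ y z / PZ z = PXZ x z := by
                intro x
                rw [← Finset.sum_div, ← Finset.mul_sum, mZy, mul_div_assoc, div_self h,
                  mul_one]
              simp only [e2]
              rw [mZx]
        _ ≤ ∑ z, PZ z := Finset.sum_le_sum fun z _ => by
            by_cases h : PZ z = 0 <;> simp [h, hPZnn z]
        _ = 1 := sum_probOf μ Z)
  have expand : ∀ a : S × T × U, P a.1 a.2.1 a.2.2 * Real.log (Q a.1 a.2.1 a.2.2)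
      = P a.1 a.2.1 a.2.2 * Real.log (PXZ a.1 a.2.2)
        + P a.1 a.2.1 a.2.2 * Real.log (PYZ a.2.1 a.2.2)
        - P a.1 a.2.1 a.2.2 * Real.log (PZ a.2.2) := by
    intro a
    by_cases h : P a.1 a.2.1 a.2.2 = 0
    · simp [h]
    · have hP : 0 < P a.1 a.2.1 a.2.2 := (hPnn _ _ _).lt_of_ne (Ne.symm h)
      have h1 : 0 < PXZ a.1 a.2.2 := lt_of_lt_of_le hP (hle1 _ _ _)
      have h2 : 0 < PYZ a.2.1 a.2.2 := lt_of_lt_of_le hP (hle2 _ _ _)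
      have h3 : 0 < PZ a.2.2 := lt_of_lt_of_le h1 (hle3 _ _)
      rw [show Q a.1 a.2.1 a.2.2 = PXZ a.1 a.2.2 * PYZ a.2.1 a.2.2 / PZ a.2.2 from by
          simp only [hQdef, if_neg (ne_of_gt h3)],
        Real.log_div (ne_of_gt (mul_pos h1 h2)) (ne_of_gt h3),
        Real.log_mul (ne_of_gt h1) (ne_of_gt h2)]
      ring
  have sum_eq : ∑ a : S × T × U, P a.1 a.2.1 a.2.2 * Real.log (Q a.1 a.2.1 a.2.2)
      = (∑ a : S × T × U, P a.1 a.2.1 a.2.2 * Real.log (PXZ a.1 a.2.2))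
        + (∑ a : S × T × U, P a.1 a.2.1 a.2.2 * Real.log (PYZ a.2.1 a.2.2))
        - (∑ a : S × T × U, P a.1 a.2.1 a.2.2 * Real.log (PZ a.2.2)) := by
    rw [← Finset.sum_add_distrib, ← Finset.sum_sub_distrib]
    exact Finset.sum_congr rfl fun a _ => expand a
  rw [sum_eq] at key
  rw [HXYZ, HXZ, HYZ, HZ]
  linarith [key]


lemma entropy_const_unit (μ : FinProb Ω) : entropy μ (fun _ : Ω => ()) = 0 := by
  simp [entropy, probOf, μ.sum_one]

lemma subadd {S T : Type*} [Fintype S] [Fintype T] [DecidableEq S] [DecidableEq T]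
    (μ : FinProb Ω) (X : Ω → S) (Y : Ω → T) :
    entropy μ (fun ω => (X ω, Y ω)) ≤ entropy μ X + entropy μ Y := by
  have h := submod μ X Y (fun _ => ())
  have h1 : entropy μ (fun ω => (X ω, Y ω, ())) = entropy μ (fun ω => (X ω, Y ω)) :=
    entropy_comp_equiv μ
      (⟨fun p => (p.1, p.2, ()), fun p => (p.1, p.2.1), fun p => rfl, fun p => rfl⟩ :
        (S × T) ≃ (S × T × Unit))
      (fun ω => (X ω, Y ω))
  have h2 : entropy μ (fun ω => (X ω, ())) = entropy μ X :=
    entropy_comp_equiv μ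
      (⟨fun s => (s, ()), fun p => p.1, fun s => rfl, fun p => rfl⟩ : S ≃ S × Unit) X
  have h3 : entropy μ (fun ω => (Y ω, ())) = entropy μ Y :=
    entropy_comp_equiv μ
      (⟨fun s => (s, ()), fun p => p.1, fun s => rfl, fun p => rfl⟩ : T ≃ T × Unit) Y
  have h4 := entropy_const_unit μ
  linarith

end aux

theorem dtc_three_sandwich {Ω S1 S2 S3 : Type*} [Fintype Ω]
    [Fintype S1] [Fintype S2] [Fintype S3]
    [DecidableEq S1] [DecidableEq S2] [DecidableEq S3]
    (μ : FinProb Ω) (X1 : Ω → S1) (X2 : Ω → S2) (X3 : Ω → S3) :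
    (1/3) * (mutualInfo μ (fun ω => (X1 ω, X2 ω)) X3
              + mutualInfo μ (fun ω => (X2 ω, X3 ω)) X1
              + mutualInfo μ (fun ω => (X1 ω, X3 ω)) X2)
      ≤ DTC3 μ X1 X2 X3 ∧
    DTC3 μ X1 X2 X3
      ≤ (2/3) * (mutualInfo μ (fun ω => (X1 ω, X2 ω)) X3
                  + mutualInfo μ (fun ω => (X2 ω, X3 ω)) X1
                  + mutualInfo μ (fun ω => (X1 ω, X3 ω)) X2) := by
  have hA := submod μ X1 X2 X3
  have hB := submod μ X2 X3 X1
  have hC := submod μ X1 X3 X2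
  have hD := subadd μ X1 X2
  have hE := subadd μ X1 X3
  have hF := subadd μ X2 X3
  have t231 : entropy μ (fun ω => (X2 ω, X3 ω, X1 ω))
      = entropy μ (fun ω => (X1 ω, X2 ω, X3 ω)) :=
    entropy_comp_equiv μ
      (⟨fun p => (p.2.1, (p.2.2, p.1)), fun p => (p.2.2, (p.1, p.2.1)),
        fun p => rfl, fun p => rfl⟩ : (S1 × S2 × S3) ≃ (S2 × S3 × S1))
      (fun ω => (X1 ω, X2 ω, X3 ω))
  have t132 : entropy μ (fun ω => (X1 ω, X3 ω, X2 ω))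
      = entropy μ (fun ω => (X1 ω, X2 ω, X3 ω)) :=
    entropy_comp_equiv μ
      (⟨fun p => (p.1, (p.2.2, p.2.1)), fun p => (p.1, (p.2.2, p.2.1)),
        fun p => rfl, fun p => rfl⟩ : (S1 × S2 × S3) ≃ (S1 × S3 × S2))
      (fun ω => (X1 ω, X2 ω, X3 ω))
  have t213 : entropy μ (fun ω => (X2 ω, (X1 ω, X3 ω)))
      = entropy μ (fun ω => (X1 ω, X2 ω, X3 ω)) :=
    entropy_comp_equiv μ
      (⟨fun p => (p.2.1, (p.1, p.2.2)), fun p => (p.2.1, (p.1, p.2.2)),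
        fun p => rfl, fun p => rfl⟩ : (S1 × S2 × S3) ≃ (S2 × S1 × S3))
      (fun ω => (X1 ω, X2 ω, X3 ω))
  have t312 : entropy μ (fun ω => (X3 ω, (X1 ω, X2 ω)))
      = entropy μ (fun ω => (X1 ω, X2 ω, X3 ω)) :=
    entropy_comp_equiv μ
      (⟨fun p => (p.2.2, (p.1, p.2.1)), fun p => (p.2.1, (p.2.2, p.1)),
        fun p => rfl, fun p => rfl⟩ : (S1 × S2 × S3) ≃ (S3 × S1 × S2))
      (fun ω => (X1 ω, X2 ω, X3 ω))
  have m123 : entropy μ (fun ω => ((X1 ω, X2 ω), X3 ω))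
      = entropy μ (fun ω => (X1 ω, X2 ω, X3 ω)) :=
    entropy_comp_equiv μ
      (⟨fun p => ((p.1, p.2.1), p.2.2), fun p => (p.1.1, (p.1.2, p.2)),
        fun p => rfl, fun p => rfl⟩ : (S1 × S2 × S3) ≃ ((S1 × S2) × S3))
      (fun ω => (X1 ω, X2 ω, X3 ω))
  have m231 : entropy μ (fun ω => ((X2 ω, X3 ω), X1 ω))
      = entropy μ (fun ω => (X1 ω, X2 ω, X3 ω)) :=
    entropy_comp_equiv μ
      (⟨fun p => (p.2, p.1), fun p => (p.2, p.1), fun p => rfl, fun p => rfl⟩ :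
        (S1 × S2 × S3) ≃ ((S2 × S3) × S1))
      (fun ω => (X1 ω, X2 ω, X3 ω))
  have m132 : entropy μ (fun ω => ((X1 ω, X3 ω), X2 ω))
      = entropy μ (fun ω => (X1 ω, X2 ω, X3 ω)) :=
    entropy_comp_equiv μ
      (⟨fun p => ((p.1, p.2.2), p.2.1), fun p => (p.1.1, (p.2, p.1.2)),
        fun p => rfl, fun p => rfl⟩ : (S1 × S2 × S3) ≃ ((S1 × S3) × S2))
      (fun ω => (X1 ω, X2 ω, X3 ω))
  have s21 : entropy μ (fun ω => (X2 ω, X1 ω)) = entropy μ (fun ω => (X1 ω, X2 ω)) :=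
    entropy_comp_equiv μ
      (⟨fun p => (p.2, p.1), fun p => (p.2, p.1), fun p => rfl, fun p => rfl⟩ :
        (S1 × S2) ≃ (S2 × S1))
      (fun ω => (X1 ω, X2 ω))
  have s31 : entropy μ (fun ω => (X3 ω, X1 ω)) = entropy μ (fun ω => (X1 ω, X3 ω)) :=
    entropy_comp_equiv μ
      (⟨fun p => (p.2, p.1), fun p => (p.2, p.1), fun p => rfl, fun p => rfl⟩ :
        (S1 × S3) ≃ (S3 × S1))
      (fun ω => (X1 ω, X3 ω))
  have s32 : entropy μ (fun ω => (X3 ω, X2 ω)) = entropy μ (fun ω => (X2 ω, X3 ω)) :=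
    entropy_comp_equiv μ
      (⟨fun p => (p.2, p.1), fun p => (p.2, p.1), fun p => rfl, fun p => rfl⟩ :
        (S2 × S3) ≃ (S3 × S2))
      (fun ω => (X2 ω, X3 ω))
  simp only [DTC3, condEntropy, mutualInfo]
  constructor <;> linarith [hA, hB, hC, hD, hE, hF]
end

section
/- For M ≥ 3 jointly distributed discrete random variables, DTC(X1,...,XM) = DTC(X1,...,X_{M-1}) + Σ_{i=1}^{M-1} I(X_i ; X_M | X_{[M-1]\{i}}). -/
open BigOperators

/-- The joint of all variables except `X i`. -/
def jointExcept {Ω S ι : Type*} (X : ι → Ω → S) (i : ι) :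
    Ω → ({j : ι // j ≠ i} → S) := fun ω j => X j.1 ω

/-- Total correlation `TotCorr(X1,...,XM) = Σ_i H(X_i) - H(X1,...,XM)`. -/
noncomputable def TotCorr {Ω S ι : Type*} [Fintype Ω] [Fintype S] [DecidableEq S]
    [Fintype ι] [DecidableEq ι] (μ : FinProb Ω) (X : ι → Ω → S) : ℝ :=
  (∑ i, entropy μ (X i)) - entropy μ (fun ω i => X i ω)

/-- Dual total correlation `DualTotCorr(X1,...,XM) = H(X1,...,XM) - Σ_i H(X_i | X_{[M]\{i}})`. -/
noncomputable def DualTotCorr {Ω S ι : Type*} [Fintype Ω] [Fintype S] [DecidableEq S]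
    [Fintype ι] [DecidableEq ι] (μ : FinProb Ω) (X : ι → Ω → S) : ℝ :=
  entropy μ (fun ω i => X i ω) - ∑ i, condEntropy μ (X i) (jointExcept X i)

lemma entropy_comp_of_injective {Ω S T : Type*} [Fintype Ω] [Fintype S] [Fintype T]
    [DecidableEq S] [DecidableEq T] (μ : FinProb Ω) (X : Ω → S) (e : S → T)
    (he : Function.Injective e) :
    entropy μ (fun ω => e (X ω)) = entropy μ X := by
  unfold entropy
  congr 1
  have h1 : ∑ t : T, probOf μ (fun ω => e (X ω)) t * Real.log (probOf μ (fun ω => e (X ω)) t)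
      = ∑ t ∈ Finset.univ.image e, probOf μ (fun ω => e (X ω)) t *
          Real.log (probOf μ (fun ω => e (X ω)) t) := by
    refine (Finset.sum_subset (Finset.subset_univ _) ?_).symm
    intro t _ ht
    have h0 : probOf μ (fun ω => e (X ω)) t = 0 := by
      apply Finset.sum_eq_zero
      intro ω _
      rw [if_neg]
      intro h
      exact ht (Finset.mem_image.2 ⟨X ω, Finset.mem_univ _, h⟩)
    simp [h0]
  rw [h1, Finset.sum_image (fun a _ b _ h => he h)]
  refine Finset.sum_congr rfl fun s _ => ?_
  have hq : probOf μ (fun ω => e (X ω)) (e s) = probOf μ X s := by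
    unfold probOf
    refine Finset.sum_congr rfl fun ω _ => ?_
    simp [he.eq_iff]
  rw [hq]

lemma entropy_congr {Ω S T : Type*} [Fintype Ω] [Fintype S] [Fintype T]
    [DecidableEq S] [DecidableEq T] (μ : FinProb Ω) (X : Ω → S) (Y : Ω → T)
    (f : S → T) (g : T → S) (hf : ∀ ω, f (X ω) = Y ω) (hg : ∀ ω, g (Y ω) = X ω) :
    entropy μ X = entropy μ Y := by
  have h1 : entropy μ (fun ω => (X ω, Y ω)) = entropy μ X := by
    have := entropy_comp_of_injective μ X (fun s => (s, f s))
      (fun a b h => congrArg Prod.fst h)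
    simp only [hf] at this
    exact this
  have h2 : entropy μ (fun ω => (Y ω, X ω)) = entropy μ Y := by
    have := entropy_comp_of_injective μ Y (fun t => (t, g t))
      (fun a b h => congrArg Prod.fst h)
    simp only [hg] at this
    exact this
  have h3 : entropy μ (fun ω => (Y ω, X ω)) = entropy μ (fun ω => (X ω, Y ω)) :=
    entropy_comp_of_injective μ (fun ω => (X ω, Y ω)) Prod.swap Prod.swap_injective
  rw [← h1, ← h2, h3]

lemma entropy_pair_jointExcept {Ω S ι : Type*} [Fintype Ω] [Fintype S] [DecidableEq S]
    [Fintype ι] [DecidableEq ι] (μ : FinProb Ω) (X : ι → Ω → S) (i : ι) :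
    entropy μ (fun ω => (X i ω, jointExcept X i ω)) = entropy μ (fun ω j => X j ω) := by
  refine entropy_congr μ _ _
    (fun p j => if h : j = i then p.1 else p.2 ⟨j, h⟩)
    (fun u => (u i, fun j => u j.1)) ?_ ?_
  · intro ω; funext j
    by_cases h : j = i
    · subst h; simp
    · simp [h, jointExcept]
  · intro ω; rfl

lemma entropy_jointExcept_last {Ω S : Type*} [Fintype Ω] [Fintype S] [DecidableEq S]
    (N : ℕ) (μ : FinProb Ω) (X : Fin (N + 1) → Ω → S) :
    entropy μ (jointExcept X (Fin.last N))
      = entropy μ (fun ω (j : Fin N) => X (Fin.castSucc j) ω) := by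
  refine entropy_congr μ _ _
    (fun v j => v ⟨Fin.castSucc j, (Fin.castSucc_lt_last j).ne⟩)
    (fun u j => u ⟨(j.1 : ℕ), by
      have h1 := j.1.isLt
      have h2 : (j.1 : ℕ) ≠ N := fun h => j.2 (Fin.ext h)
      omega⟩) ?_ ?_
  · intro ω; rfl
  · intro ω; funext j
    show X _ ω = X j.1 ω
    congr 1
    all_goals exact Fin.ext rfl

lemma entropy_last_jointExcept {Ω S : Type*} [Fintype Ω] [Fintype S] [DecidableEq S]
    (N : ℕ) (μ : FinProb Ω) (X : Fin (N + 1) → Ω → S) (i : Fin N) :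
    entropy μ (fun ω => (X (Fin.last N) ω,
        jointExcept (fun j : Fin N => X (Fin.castSucc j)) i ω))
      = entropy μ (jointExcept X (Fin.castSucc i)) := by
  refine entropy_congr μ _ _
    (fun p j => if h : (j.1 : ℕ) < N then
        p.2 ⟨⟨(j.1 : ℕ), h⟩, fun he => j.2 (by apply Fin.ext; simp only [Fin.coe_castSucc]; exact congrArg Fin.val he)⟩
      else p.1)
    (fun u => (u ⟨Fin.last N, (Fin.castSucc_lt_last i).ne'⟩,
      fun j => u ⟨Fin.castSucc j.1, fun he => j.2 (Fin.castSucc_injective N he)⟩)) ?_ ?_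
  · intro ω; funext j
    by_cases h : (j.1 : ℕ) < N
    · simp only [dif_pos h]
      show X _ ω = X j.1 ω
      congr 1
      all_goals exact Fin.ext rfl
    · simp only [dif_neg h]
      show X (Fin.last N) ω = X j.1 ω
      congr 1
      have := j.1.isLt
      exact Fin.ext (by simp [Fin.last]; omega)
  · intro ω; rfl

lemma entropy_triple_jointExcept {Ω S : Type*} [Fintype Ω] [Fintype S] [DecidableEq S]
    (N : ℕ) (μ : FinProb Ω) (X : Fin (N + 1) → Ω → S) (i : Fin N) :
    entropy μ (fun ω => (X (Fin.castSucc i) ω, X (Fin.last N) ω,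
        jointExcept (fun j : Fin N => X (Fin.castSucc j)) i ω))
      = entropy μ (fun ω j => X j ω) := by
  refine entropy_congr μ _ _
    (fun p j => if h : (j : ℕ) < N then
        (if h2 : (⟨(j : ℕ), h⟩ : Fin N) = i then p.1
         else p.2.2 ⟨⟨(j : ℕ), h⟩, h2⟩)
      else p.2.1)
    (fun u => (u (Fin.castSucc i), u (Fin.last N), fun j => u (Fin.castSucc j.1))) ?_ ?_
  · intro ω; funext j
    by_cases h : (j : ℕ) < N
    · by_cases h2 : (⟨(j : ℕ), h⟩ : Fin N) = i
      · simp only [dif_pos h, dif_pos h2]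
        show X (Fin.castSucc i) ω = X j ω
        congr 1
        rw [← h2]
        exact Fin.ext rfl
      · simp only [dif_pos h, dif_neg h2]
        show X _ ω = X j ω
        congr 1
        all_goals exact Fin.ext rfl
    · simp only [dif_neg h]
      show X (Fin.last N) ω = X j ω
      congr 1
      have := j.isLt
      exact Fin.ext (by simp [Fin.last]; omega)
  · intro ω; rfl

theorem dtc_recursion_aux {Ω S : Type*} [Fintype Ω] [Fintype S] [DecidableEq S]
    (N : ℕ) (μ : FinProb Ω) (X : Fin (N + 1) → Ω → S) :
    DualTotCorr μ X =
      DualTotCorr μ (fun i : Fin N => X (Fin.castSucc i))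
      + ∑ i : Fin N,
          condMutualInfo μ (X (Fin.castSucc i)) (X (Fin.last N))
            (jointExcept (fun j : Fin N => X (Fin.castSucc j)) i) := by
  simp only [DualTotCorr, condEntropy, condMutualInfo]
  have e1 : ∀ i : Fin (N + 1),
      entropy μ (fun ω => (X i ω, jointExcept X i ω)) = entropy μ (fun ω j => X j ω) :=
    fun i => entropy_pair_jointExcept μ X i
  have e2 : ∀ i : Fin N,
      entropy μ (fun ω => (X (Fin.castSucc i) ω,
          jointExcept (fun j : Fin N => X (Fin.castSucc j)) i ω))
        = entropy μ (fun ω (j : Fin N) => X (Fin.castSucc j) ω) :=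
    fun i => entropy_pair_jointExcept μ (fun j : Fin N => X (Fin.castSucc j)) i
  have e3 := entropy_jointExcept_last N μ X
  have e4 := entropy_last_jointExcept N μ X
  have e5 := entropy_triple_jointExcept N μ X
  simp only [e1, e2, e4, e5]
  rw [Fin.sum_univ_castSucc
    (f := fun i : Fin (N+1) => entropy μ (fun ω j => X j ω) - entropy μ (jointExcept X i))]
  rw [e3]
  simp only [Finset.sum_sub_distrib, Finset.sum_add_distrib, Finset.sum_const,
    Finset.card_univ, Fintype.card_fin, nsmul_eq_mul]
  ring

theorem dtc_recursion {Ω S : Type*} [Fintype Ω] [Fintype S] [DecidableEq S]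
    (M : ℕ) (hM : 3 ≤ M) (μ : FinProb Ω) (X : Fin M → Ω → S) :
    DualTotCorr μ X =
      DualTotCorr μ (fun i : Fin (M - 1) => X (Fin.castLE (Nat.sub_le M 1) i))
      + ∑ i : Fin (M - 1),
          condMutualInfo μ (X (Fin.castLE (Nat.sub_le M 1) i))
            (X ⟨M - 1, by omega⟩)
            (jointExcept (fun j : Fin (M - 1) => X (Fin.castLE (Nat.sub_le M 1) j)) i) := by
  obtain ⟨N, rfl⟩ : ∃ N, M = N + 1 := ⟨M - 1, by omega⟩
  exact dtc_recursion_aux N μ X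
end
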